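/- Let v be an aperiodic infinite binary word. If the series Φ_ℝ(v) converges, then 2^ℓ/3^{h(ℓ)} → 0 as ℓ → ∞, and consequently liminf_{ℓ→∞} h(ℓ)/ℓ ≥ log 2 / log 3. -/

import Mathlib

/-- An infinite binary word is eventually periodic if for some period `p ≥ 1`
its digits satisfy `v (n+p) = v n` from some index on. -/
def EventuallyPeriodicWord (v : ℕ → Bool) : Prop :=
  ∃ p : ℕ, 0 < p ∧ ∃ N : ℕ, ∀ n ≥ N, v (n + p) = v n

/-- The position of the `i`-th `1` (0-indexed) of the infinite binary word `v`. -/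
noncomputable def onePos (v : ℕ → Bool) (i : ℕ) : ℕ :=
  Nat.nth (fun n => v n = true) i

/-- The `m`-th partial sum of the series `Φ_ℝ(v) = −∑_{i} 2^{d_i}/3^{i+1}`,
where `d_i` enumerates the positions of the `1`s of `v`. -/
noncomputable def phiPartial (v : ℕ → Bool) (m : ℕ) : ℝ :=
  -∑ i ∈ Finset.range m, (2 : ℝ) ^ onePos v i / 3 ^ (i + 1)

/-- The number of `1`s among the first `ℓ` digits of the infinite binary word `v`. -/
def heightOfPrefix (v : ℕ → Bool) (ℓ : ℕ) : ℕ :=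
  ((Finset.range ℓ).filter fun k => v k = true).card

open Filter

lemma infinite_ones (v : ℕ → Bool) (hv : ¬ EventuallyPeriodicWord v) :
    {n | v n = true}.Infinite := by
  by_contra hfin
  rw [Set.not_infinite] at hfin
  apply hv
  refine ⟨1, one_pos, ?_⟩
  by_contra h
  · -- if the set of ones is finite, v is eventually 0
    rcases hfin.bddAbove with ⟨m, hm⟩
    refine h ⟨m + 1, fun n hn => ?_⟩
    have h1 : v n = false := by
      by_contra hb
      have : v n = true := by simpa using hb
      exact absurd (hm this) (by omega)
    have h2 : v (n + 1) = false := by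
      by_contra hb
      have : v (n + 1) = true := by simpa using hb
      exact absurd (hm this) (by omega)
    rw [h1, h2]

/-- If `v` is aperiodic and the series `Φ_ℝ(v)` converges, then
`2^ℓ/3^{h(ℓ)} → 0`, and consequently `liminf h(ℓ)/ℓ ≥ log 2 / log 3`. -/
theorem stmt10 (v : ℕ → Bool) (hv : ¬ EventuallyPeriodicWord v)
    (hconv : ∃ ζ : ℝ, Tendsto (phiPartial v) atTop (nhds ζ)) :
    Tendsto (fun ℓ : ℕ => (2 : ℝ) ^ ℓ / 3 ^ heightOfPrefix v ℓ) atTop (nhds 0) ∧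
    Real.log 2 / Real.log 3 ≤
      liminf (fun ℓ : ℕ => (heightOfPrefix v ℓ : ℝ) / ℓ) atTop := by
  set p : ℕ → Prop := fun n => v n = true with hp
  have hinf : {n | p n}.Infinite := infinite_ones v hv
  obtain ⟨ζ, hζ⟩ := hconv
  set f : ℕ → ℝ := fun i => (2 : ℝ) ^ onePos v i / 3 ^ (i + 1) with hf
  -- partial sums of f converge, hence f → 0
  have hS : Tendsto (fun m => ∑ i ∈ Finset.range m, f i) atTop (nhds (-ζ)) := by
    have := hζ.neg
    simpa [phiPartial] using this
  have hf0 : Tendsto f atTop (nhds 0) := by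
    have h1 : Tendsto (fun m => ∑ i ∈ Finset.range (m + 1), f i) atTop (nhds (-ζ)) :=
      hS.comp (tendsto_add_atTop_nat 1)
    have := h1.sub hS
    simpa [Finset.sum_range_succ] using this
  -- height = count
  have hcount : ∀ ℓ, heightOfPrefix v ℓ = Nat.count p ℓ := by
    intro ℓ
    rw [Nat.count_eq_card_filter_range]
    rfl
  -- h → ∞
  have hh : Tendsto (fun ℓ => heightOfPrefix v ℓ) atTop atTop := by
    simp only [hcount]
    refine tendsto_atTop_atTop_of_monotone (Nat.count_monotone p) (fun b => ?_)
    exact ⟨Nat.nth p b, (Nat.count_nth_of_infinite hinf b).ge⟩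
  -- the main bound: 2^ℓ / 3^(h ℓ) ≤ 3 * f (h ℓ)
  have hbound : ∀ ℓ, (2 : ℝ) ^ ℓ / 3 ^ heightOfPrefix v ℓ ≤ 3 * f (heightOfPrefix v ℓ) := by
    intro ℓ
    have hle : ℓ ≤ onePos v (heightOfPrefix v ℓ) := by
      rw [hcount]
      exact Nat.le_nth_count hinf ℓ
    have h2 : (2 : ℝ) ^ ℓ ≤ 2 ^ onePos v (heightOfPrefix v ℓ) :=
      pow_le_pow_right₀ one_le_two hle
    have heq : 3 * f (heightOfPrefix v ℓ) =
        (2 : ℝ) ^ onePos v (heightOfPrefix v ℓ) / 3 ^ heightOfPrefix v ℓ := by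
      simp only [hf]
      rw [pow_succ]
      field_simp
    rw [heq]
    gcongr
  -- Part 1
  have part1 : Tendsto (fun ℓ : ℕ => (2 : ℝ) ^ ℓ / 3 ^ heightOfPrefix v ℓ) atTop (nhds 0) := by
    have hupper : Tendsto (fun ℓ => 3 * f (heightOfPrefix v ℓ)) atTop (nhds 0) := by
      have := (hf0.comp hh).const_mul (3 : ℝ)
      simpa using this
    exact squeeze_zero (fun ℓ => by positivity) hbound hupper
  refine ⟨part1, ?_⟩
  -- Part 2
  have hlog3 : (0 : ℝ) < Real.log 3 := Real.log_pos (by norm_num)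
  have hev : ∀ᶠ ℓ : ℕ in atTop,
      Real.log 2 / Real.log 3 ≤ (heightOfPrefix v ℓ : ℝ) / ℓ := by
    have h1 : ∀ᶠ ℓ : ℕ in atTop, (2 : ℝ) ^ ℓ / 3 ^ heightOfPrefix v ℓ ≤ 1 := by
      exact part1.eventually_le_const (show (0:ℝ) < 1 by norm_num)
    filter_upwards [h1, eventually_ge_atTop 1] with ℓ hℓ hℓ1
    have hℓpos : (0 : ℝ) < ℓ := by exact_mod_cast hℓ1
    have h2 : (2 : ℝ) ^ ℓ ≤ 3 ^ heightOfPrefix v ℓ := by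
      have h3 : (0 : ℝ) < 3 ^ heightOfPrefix v ℓ := by positivity
      rw [div_le_one h3] at hℓ
      exact hℓ
    have h4 : (ℓ : ℝ) * Real.log 2 ≤ (heightOfPrefix v ℓ : ℝ) * Real.log 3 := by
      have := Real.log_le_log (by positivity) h2
      rwa [Real.log_pow, Real.log_pow] at this
    rw [div_le_div_iff₀ hlog3 hℓpos]
    linarith
  refine le_liminf_of_le ?_ hev
  · apply isCoboundedUnder_ge_of_eventually_le (l := atTop) (x := (1 : ℝ))
    filter_upwards [eventually_ge_atTop 1] with ℓ hℓ1
    have hℓpos : (0 : ℝ) < ℓ := by exact_mod_cast hℓ1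
    rw [div_le_one hℓpos]
    have : heightOfPrefix v ℓ ≤ ℓ := by
      unfold heightOfPrefix
      exact (Finset.card_filter_le _ _).trans (by simp)
    exact_mod_cast this
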